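/- Let n ≥ 1, let σ = (σ_1, …, σ_{n+1}) be positive real numbers and m' > m > 0. Let ρ(x) = Σ_{j=1}^{n+1} |x_j|^{1/σ_j} be the quasihomogeneous gauge. Let f = f_Γ + R, where f_Γ : ℝ^{n+1} → ℝ is continuous and quasihomogeneous of type (σ, m), and R : ℝ^{n+1} → ℝ satisfies |R(x)| ≤ C ρ(x)^{m'} for some constant C > 0 and all x with ρ(x) ≤ 1. Suppose (x_k) is a sequence with f(x_k) = 0, (t_k) is a sequence of positive reals with t_k → ∞, and S_{t_k,σ}(x_k) → η as k → ∞. Then f_Γ(η) = 0. In other words, the quasihomogeneous tangent cone of the zero set of f is contained in the zero set of the principal part f_Γ. -/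

import Mathlib

open Filter

/-- **The quasihomogeneous tangent cone lies in the zero set of the principal part.**
Let `f = f_Γ + R` with `f_Γ` continuous and quasihomogeneous of type `(σ, m)` and
`|R x| ≤ C ρ(x)^{m'}` for the quasihomogeneous gauge `ρ(x) = ∑ |x_j|^{1/σ_j}`, `m' > m > 0`.
If `f (x_k) = 0`, `t_k → ∞` and `S_{t_k,σ}(x_k) → η`, then `f_Γ η = 0`. -/
theorem tangent_cone_in_zero_set_of_principal_part
    (n : ℕ) (hn : 1 ≤ n) (σ : Fin (n + 1) → ℝ) (hσ : ∀ j, 0 < σ j)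
    (m m' : ℝ) (hm : 0 < m) (hmm' : m < m')
    (fΓ R : (Fin (n + 1) → ℝ) → ℝ)
    (hfΓcont : Continuous fΓ)
    (hfΓqh : ∀ t : ℝ, 0 < t → ∀ x : Fin (n + 1) → ℝ,
      fΓ (fun j => t ^ (σ j) * x j) = t ^ m * fΓ x)
    (C : ℝ) (hC : 0 < C)
    (hR : ∀ x : Fin (n + 1) → ℝ, (∑ j, |x j| ^ (1 / σ j)) ≤ 1 →
      |R x| ≤ C * (∑ j, |x j| ^ (1 / σ j)) ^ m')
    (x : ℕ → Fin (n + 1) → ℝ) (hx : ∀ k, fΓ (x k) + R (x k) = 0)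
    (t : ℕ → ℝ) (ht : Tendsto t atTop atTop)
    (η : Fin (n + 1) → ℝ)
    (hlim : Tendsto (fun k => (fun j => (t k) ^ (σ j) * x k j)) atTop (nhds η)) :
    fΓ η = 0 := by
  set ρ : (Fin (n + 1) → ℝ) → ℝ := fun y => ∑ j, |y j| ^ (1 / σ j) with hρdef
  -- continuity of the gauge
  have hρcont : Continuous ρ := by
    apply continuous_finset_sum
    intro j _
    have h1 : Continuous fun y : Fin (n + 1) → ℝ => |y j| := (continuous_apply j).abs
    have h2 : Continuous fun s : ℝ => s ^ (1 / σ j) := by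
      refine continuous_iff_continuousAt.2 fun s => ?_
      exact Real.continuousAt_rpow_const s _ (Or.inr (one_div_pos.mpr (hσ j)).le)
    exact h2.comp h1
  have hρnonneg : ∀ y, 0 ≤ ρ y := by
    intro y
    exact Finset.sum_nonneg fun j _ => Real.rpow_nonneg (abs_nonneg _) _
  -- gauge identity under scaling
  have hgauge : ∀ k, 0 < t k → ρ (fun j => t k ^ σ j * x k j) = t k * ρ (x k) := by
    intro k hk
    simp only [hρdef, Finset.mul_sum]
    refine Finset.sum_congr rfl fun j _ => ?_
    rw [abs_mul, abs_of_pos (Real.rpow_pos_of_pos hk _),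
        Real.mul_rpow (Real.rpow_pos_of_pos hk _).le (abs_nonneg _),
        ← Real.rpow_mul hk.le, mul_one_div,
        div_self (hσ j).ne', Real.rpow_one]
  set M : ℝ := ρ η + 1 with hMdef
  have hMpos : 0 < M := by
    have := hρnonneg η; simp only [hMdef]; linarith
  have hgρ : Tendsto (fun k => ρ (fun j => t k ^ σ j * x k j)) atTop (nhds (ρ η)) :=
    (hρcont.tendsto η).comp hlim
  -- eventual bounds
  have hev1 : ∀ᶠ k in atTop, ρ (fun j => t k ^ σ j * x k j) ≤ M := by
    have : ∀ᶠ s in nhds (ρ η), s ≤ M := by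
      apply Filter.Tendsto.eventually_le_const (by simp [hMdef]) tendsto_id
    exact hgρ.eventually this
  have hev2 : ∀ᶠ k in atTop, max 1 M ≤ t k := ht.eventually_ge_atTop _
  -- the key decay estimate
  have hbound : ∀ᶠ k in atTop, |t k ^ m * R (x k)| ≤ C * M ^ m' * t k ^ (m - m') := by
    filter_upwards [hev1, hev2] with k h1 h2
    have htk1 : (1 : ℝ) ≤ t k := le_trans (le_max_left _ _) h2
    have htkM : M ≤ t k := le_trans (le_max_right _ _) h2
    have htkpos : 0 < t k := lt_of_lt_of_le one_pos htk1
    have hρxk : ρ (x k) ≤ M / t k := by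
      rw [le_div_iff₀ htkpos, mul_comm]
      calc t k * ρ (x k) = ρ (fun j => t k ^ σ j * x k j) := (hgauge k htkpos).symm
        _ ≤ M := h1
    have hρxk1 : ρ (x k) ≤ 1 := le_trans hρxk ((div_le_one htkpos).mpr htkM)
    have hRb := hR (x k) hρxk1
    have hM : ρ (x k) ^ m' ≤ (M / t k) ^ m' :=
      Real.rpow_le_rpow (hρnonneg _) hρxk (le_of_lt (lt_trans hm hmm'))
    have h3 : |R (x k)| ≤ C * (M / t k) ^ m' := by
      calc |R (x k)| ≤ C * ρ (x k) ^ m' := hRb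
        _ ≤ C * (M / t k) ^ m' := by nlinarith
    rw [abs_mul, abs_of_pos (Real.rpow_pos_of_pos htkpos _)]
    calc t k ^ m * |R (x k)| ≤ t k ^ m * (C * (M / t k) ^ m') := by
          have := Real.rpow_pos_of_pos htkpos m
          nlinarith
      _ = C * M ^ m' * t k ^ (m - m') := by
          rw [Real.div_rpow hMpos.le htkpos.le, Real.rpow_sub htkpos]
          ring
  -- the bound tends to zero
  have hrhs : Tendsto (fun k => C * M ^ m' * t k ^ (m - m')) atTop (nhds 0) := by
    have h0 : Tendsto (fun s : ℝ => s ^ (m - m')) atTop (nhds 0) := by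
      have := tendsto_rpow_neg_atTop (y := m' - m) (by linarith)
      simpa [neg_sub] using this
    have := (h0.comp ht).const_mul (C * M ^ m')
    simpa using this
  have hzero : Tendsto (fun k => t k ^ m * R (x k)) atTop (nhds 0) := by
    apply squeeze_zero_norm' _ hrhs
    filter_upwards [hbound] with k hk
    rw [Real.norm_eq_abs, abs_mul] at *; exact hk
  -- f_Γ along the scaled sequence
  have hA : Tendsto (fun k => fΓ (fun j => t k ^ σ j * x k j)) atTop (nhds (fΓ η)) :=
    (hfΓcont.tendsto η).comp hlim
  have heq : ∀ᶠ k in atTop, fΓ (fun j => t k ^ σ j * x k j) = -(t k ^ m * R (x k)) := by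
    filter_upwards [ht.eventually_gt_atTop 0] with k hk
    have h1 := hfΓqh (t k) hk (x k)
    have h2 : fΓ (x k) = -R (x k) := by linarith [hx k]
    rw [h1, h2]; ring
  have hA0 : Tendsto (fun k => fΓ (fun j => t k ^ σ j * x k j)) atTop (nhds 0) := by
    rw [show (0 : ℝ) = -0 by ring]
    exact Tendsto.congr' (Filter.EventuallyEq.symm heq) hzero.neg
  exact tendsto_nhds_unique hA hA0
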